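/- If A ⊆ ℕ is a quasi-central set, then for every α > 0 and every 0 < γ < 1 the set g_{α,γ}(A) = {⌊nα + γ⌋ : n ∈ A} is a quasi-central set. -/

import Mathlib

open Set Filter Topology

attribute [local instance] Ultrafilter.add

/-- The nonhomogeneous spectrum function `g_{α,γ}(n) = ⌊nα + γ⌋`. -/
noncomputable def gFun (α γ : ℝ) (n : ℕ) : ℕ := (⌊(n : ℝ) * α + γ⌋).toNat

/-- The image `g_{α,γ}(A) = {⌊nα + γ⌋ : n ∈ A}` of a set `A ⊆ ℕ` under the spectrum map. -/
noncomputable def gImage (α γ : ℝ) (A : Set ℕ) : Set ℕ := gFun α γ '' A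

/-- A Furstenberg family: a nonempty collection of nonempty subsets of ℕ (the positive
integers), hereditary upwards. -/
def IsFurstenbergFamily (F : Set (Set ℕ)) : Prop :=
  F.Nonempty ∧ (∀ A ∈ F, A.Nonempty) ∧ ∀ A B : Set ℕ, A ∈ F → A ⊆ B → B ∈ F

/-- Translation `+` invariance of a family. -/
def TranslationInvariant (F : Set (Set ℕ)) : Prop :=
  ∀ n : ℕ, ∀ A ∈ F, (fun m => n + m) '' A ∈ F

/-- The Ramsey property of a family. -/
def HasRamseyProperty (F : Set (Set ℕ)) : Prop :=
  ∀ A B : Set ℕ, A ∪ B ∈ F → A ∈ F ∨ B ∈ F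

/-- `N((x,y), U×U) = {n ∈ ℕ : Tⁿx ∈ U and Tⁿy ∈ U}` (ℕ being the positive integers). -/
def retTimes2 {X : Type*} (T : X → X) (x y : X) (U : Set X) : Set ℕ :=
  {n : ℕ | 0 < n ∧ T^[n] x ∈ U ∧ T^[n] y ∈ U}

/-- `N(x, U) = {n ∈ ℕ : Tⁿx ∈ U}` (ℕ being the positive integers). -/
def retTimes1 {X : Type*} (T : X → X) (x : X) (U : Set X) : Set ℕ :=
  {n : ℕ | 0 < n ∧ T^[n] x ∈ U}

/-- `x` is `F`-strongly proximal to `y`: for every neighborhood `U` of `y`,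
`N((x,y),U×U) ∈ F`. -/
def StronglyProximal {X : Type*} [TopologicalSpace X] (F : Set (Set ℕ))
    (T : X → X) (x y : X) : Prop :=
  ∀ U ∈ nhds y, retTimes2 T x y U ∈ F

/-- `A` is an essential `F`-set: witnessed by a dynamical system (compact metric space with a
continuous self-map), a pair of points `x` `F`-strongly proximal to `y`, and a neighborhood
`U` of `y` with `N((x,y),U×U) ⊆ A`. -/
def IsEssentialSet (F : Set (Set ℕ)) (A : Set ℕ) : Prop :=
  ∃ (X : Type) (_ : MetricSpace X) (_ : CompactSpace X) (T : X → X),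
    Continuous T ∧ ∃ x y : X, StronglyProximal F T x y ∧
      ∃ U ∈ nhds y, retTimes2 T x y U ⊆ A

/-- The return-time set of the pair `((x,γ),(y,γ))` to the neighborhood `U × (γ-ε, γ+ε)`
in the suspension `(Y, F_{α⁻¹})`, expressed on the base:
`{n : F_{α⁻¹}ⁿ(x,γ) ∈ U × (γ-ε,γ+ε) and F_{α⁻¹}ⁿ(y,γ) ∈ U × (γ-ε,γ+ε)}`, where
`F_{α⁻¹}ⁿ(x,t) = (T^{⌊n/α+t⌋}x, n/α+t-⌊n/α+t⌋)`. -/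
noncomputable def suspRet {X : Type*} (T : X → X) (x y : X) (U : Set X)
    (α γ ε : ℝ) : Set ℕ :=
  {n : ℕ | 0 < n ∧ T^[(⌊(n : ℝ) / α + γ⌋).toNat] x ∈ U ∧
    T^[(⌊(n : ℝ) / α + γ⌋).toNat] y ∈ U ∧
    γ - ε < (n : ℝ) / α + γ - ⌊(n : ℝ) / α + γ⌋ ∧
    (n : ℝ) / α + γ - ⌊(n : ℝ) / α + γ⌋ < γ + ε}

/-- The pair `(x,y)` has the `F`-suspension-proximality property at level `γ` for the
suspension `(Y, F_{α⁻¹})` of `(X,T)`: for every neighborhood `U` of `y` and every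
`0 < ε < min{γ, 1-γ}`, the corresponding return-time set in the suspension belongs to `F`
(i.e. `(x,γ)` is `F`-strongly proximal to `(y,γ)` in `(Y, F_{α⁻¹})`). -/
def SuspensionProximal {X : Type*} [TopologicalSpace X] (F : Set (Set ℕ))
    (T : X → X) (x y : X) (α γ : ℝ) : Prop :=
  ∀ U ∈ nhds y, ∀ ε : ℝ, 0 < ε → ε < min γ (1 - γ) → suspRet T x y U α γ ε ∈ F

/-- `A ⊆ ℕ` is an IP-set. -/
def IsIPSet (A : Set ℕ) : Prop :=
  ∃ p : ℕ → ℕ, (∀ n, 0 < p n) ∧ ∀ s : Finset ℕ, s.Nonempty → ∑ n ∈ s, p n ∈ A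

/-- `A ⊆ ℕ` is an AP-set: it contains arbitrarily long arithmetic progressions. -/
def IsAPSet (A : Set ℕ) : Prop :=
  ∀ m : ℕ, ∃ a b : ℕ, 0 < a ∧ 0 < b ∧ ∀ k < m, a + k * b ∈ A

/-- `A ⊆ ℕ` is a J-set. -/
def IsJSet (A : Set ℕ) : Prop :=
  ∀ (m : ℕ) (p : Fin m → ℕ → ℕ), (∀ i n, 0 < p i n) →
    ∃ r : ℕ, 0 < r ∧ ∃ s : Finset ℕ, s.Nonempty ∧ ∀ i : Fin m, r + ∑ n ∈ s, p i n ∈ A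

/-- `A ⊆ ℕ` is piecewise syndetic: for some `ℓ`, the union `⋃_{i=0}^{ℓ} (A−i)` contains
arbitrarily long intervals of consecutive integers. -/
def IsPiecewiseSyndetic (A : Set ℕ) : Prop :=
  ∃ l : ℕ, ∀ m : ℕ, ∃ n : ℕ, 0 < n ∧ ∀ k, n ≤ k → k ≤ n + m → ∃ i ≤ l, k + i ∈ A

/-- The upper density `d*(A) = limsup_{n→∞} |A ∩ [1,n]| / n`. -/
noncomputable def upperDensity (A : Set ℕ) : ℝ :=
  Filter.limsup (fun n : ℕ => ((A ∩ Set.Icc 1 n).ncard : ℝ) / n) Filter.atTop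

/-- The upper Banach density
`BD*(A) = limsup_{(n−m)→∞} |A ∩ [m,n]| / (n−m+1) = limsup_{L→∞} sup_m |A ∩ [m,m+L]| / (L+1)`. -/
noncomputable def upperBanachDensity (A : Set ℕ) : ℝ :=
  Filter.limsup (fun L : ℕ =>
    ⨆ m : ℕ, ((A ∩ Set.Icc m (m + L)).ncard : ℝ) / (L + 1)) Filter.atTop

/-- `A ⊆ ℕ` is a C-set: a member of an idempotent ultrafilter all of whose members are
J-sets. -/
def IsCSet (A : Set ℕ) : Prop :=
  ∃ p : Ultrafilter ℕ, p + p = p ∧ (∀ B ∈ p, IsJSet B) ∧ A ∈ p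

/-- `A ⊆ ℕ` is a D-set: a member of an idempotent ultrafilter all of whose members have
positive upper Banach density. -/
def IsDSet (A : Set ℕ) : Prop :=
  ∃ p : Ultrafilter ℕ, p + p = p ∧ (∀ B ∈ p, 0 < upperBanachDensity B) ∧ A ∈ p

/-- `A ⊆ ℕ` is a quasi-central set: a member of an idempotent ultrafilter all of whose
members are piecewise syndetic. -/
def IsQuasiCentralSet (A : Set ℕ) : Prop :=
  ∃ p : Ultrafilter ℕ, p + p = p ∧ (∀ B ∈ p, IsPiecewiseSyndetic B) ∧ A ∈ p

/-- The dual family `ess*(F)` of the family of essential `F`-sets. -/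
def essDual (F : Set (Set ℕ)) : Set (Set ℕ) :=
  {B : Set ℕ | ∀ A : Set ℕ, IsEssentialSet F A → (B ∩ A).Nonempty}

section QCAux

open Filter


lemma frac_small_mem (p : Ultrafilter ℕ) (hpp : p + p = p) (α : ℝ) {ε : ℝ} (hε : 0 < ε) :
    {n : ℕ | Int.fract ((n : ℝ) * α) < ε ∨ 1 - ε < Int.fract ((n : ℝ) * α)} ∈ p := by
  by_contra hQ
  rw [← Ultrafilter.compl_mem_iff_notMem] at hQ
  set C : Set ℕ := {n : ℕ | Int.fract ((n : ℝ) * α) < ε ∨ 1 - ε < Int.fract ((n : ℝ) * α)}ᶜ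
    with hCdef
  obtain ⟨K', hK'⟩ := exists_nat_one_div_lt hε
  set K : ℕ := K' + 1 with hKdef
  have hK0 : (0 : ℝ) < K := by positivity
  have hKε : 1 / (K : ℝ) < ε := by exact_mod_cast hK'
  have hεK : 1 < ε * K := by rwa [div_lt_iff₀ hK0] at hKε
  set B : ℕ → Set ℕ := fun i =>
    {n ∈ C | (i : ℝ) / K ≤ Int.fract ((n : ℝ) * α) ∧ Int.fract ((n : ℝ) * α) < ((i : ℝ) + 1) / K}
    with hBdef
  have hcover : C ⊆ ⋃ i ∈ Finset.range K, B i := by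
    intro n hn
    set t := Int.fract ((n : ℝ) * α) with ht
    have ht0 : 0 ≤ t := Int.fract_nonneg _
    have ht1 : t < 1 := Int.fract_lt_one _
    set i : ℕ := (⌊t * K⌋).toNat with hi
    have hfl0 : (0:ℤ) ≤ ⌊t * K⌋ := Int.floor_nonneg.2 (by positivity)
    have hic : (i : ℝ) = ((⌊t * K⌋ : ℤ) : ℝ) := by
      rw [hi]; exact_mod_cast congrArg (fun z : ℤ => (z : ℝ)) (Int.toNat_of_nonneg hfl0)
    have h1 : (i : ℝ) ≤ t * K := by rw [hic]; exact Int.floor_le _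
    have h2 : t * K < (i : ℝ) + 1 := by rw [hic]; exact Int.lt_floor_add_one _
    have hiK : i < K := by
      have h3 : t * K < K := by nlinarith
      have h4 : (i : ℝ) < K := by nlinarith
      exact_mod_cast h4
    refine Set.mem_biUnion (Finset.mem_range.2 hiK) ?_
    exact ⟨hn, (div_le_iff₀ hK0).2 h1, (lt_div_iff₀ hK0).2 h2⟩
  have hUnion : (⋃ i ∈ Finset.range K, B i) ∈ p := p.toFilter.mem_of_superset hQ hcover
  have hfin : (↑(Finset.range K) : Set ℕ).Finite := (Finset.range K).finite_toSet
  obtain ⟨i, hiK, hBi⟩ := (Ultrafilter.finite_biUnion_mem_iff hfin).1 (by simpa using hUnion)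
  have hBi2 : B i ∈ p + p := by rw [hpp]; exact hBi
  have hev : ∀ᶠ m in (p : Filter ℕ), ∀ᶠ n in (p : Filter ℕ), m + n ∈ B i :=
    (Ultrafilter.eventually_add p p _).1 hBi2
  have hBiev : ∀ᶠ m in (p : Filter ℕ), m ∈ B i := hBi
  obtain ⟨m, hmB, hmev⟩ := (hBiev.and hev).exists
  obtain ⟨n, hnB, hmnB⟩ := (hBiev.and hmev).exists
  set x := Int.fract ((m : ℝ) * α) with hx
  set y := Int.fract ((n : ℝ) * α) with hy
  set z := Int.fract (((m + n : ℕ) : ℝ) * α) with hz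
  have hiK' : i < K := by simpa using hiK
  obtain ⟨hmC, hx1, hx2⟩ := hmB
  obtain ⟨hnC, hy1, hy2⟩ := hnB
  obtain ⟨hmnC, hz1, hz2⟩ := hmnB
  have hmnC' : ε ≤ z ∧ z ≤ 1 - ε := by
    have h := hmnC
    simp only [hCdef, Set.mem_compl_iff, Set.mem_setOf_eq, not_or, not_lt] at h
    exact ⟨h.1, by linarith [h.2]⟩
  have hzxy : z = Int.fract (x + y) := by
    have heq : ((m + n : ℕ) : ℝ) * α = ((⌊(m : ℝ) * α⌋ + ⌊(n : ℝ) * α⌋ : ℤ) : ℝ) + (x + y) := by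
      rw [hx, hy]; unfold Int.fract; push_cast; ring
    rw [hz, heq, Int.fract_intCast_add]
  have hx0 : 0 ≤ x := Int.fract_nonneg _
  have hy0 : 0 ≤ y := Int.fract_nonneg _
  have hx1' : x < 1 := Int.fract_lt_one _
  have hy1' : y < 1 := Int.fract_lt_one _
  have hxK : (i : ℝ) ≤ x * K := (div_le_iff₀ hK0).1 hx1
  have hyK : (i : ℝ) ≤ y * K := (div_le_iff₀ hK0).1 hy1
  have hxK' : x * K < (i : ℝ) + 1 := (lt_div_iff₀ hK0).1 hx2
  have hyK' : y * K < (i : ℝ) + 1 := (lt_div_iff₀ hK0).1 hy2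
  have hzK : (i : ℝ) ≤ z * K := (div_le_iff₀ hK0).1 hz1
  have hzK' : z * K < (i : ℝ) + 1 := (lt_div_iff₀ hK0).1 hz2
  by_cases hcase : x + y < 1
  · have hzeq : z = x + y := by rw [hzxy, Int.fract_eq_self.2 ⟨by linarith, hcase⟩]
    have hi0r : (i : ℝ) < 1 := by nlinarith
    have hi0 : i = 0 := by exact_mod_cast Nat.lt_one_iff.1 (by exact_mod_cast hi0r)
    have hεz : ε * K ≤ z * K := mul_le_mul_of_nonneg_right hmnC'.1 hK0.le
    have hi0r' : (i : ℝ) = 0 := by exact_mod_cast hi0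
    linarith
  · push_neg at hcase
    have hzeq : z = x + y - 1 := by
      rw [hzxy, ← Int.fract_sub_intCast (x + y) 1]
      push_cast
      exact Int.fract_eq_self.2 ⟨by linarith, by linarith⟩
    have hzKexp : z * K = x * K + y * K - K := by rw [hzeq]; ring
    have hKi : (K : ℝ) < (i : ℝ) + 2 := by linarith
    have hKi' : K ≤ i + 1 := by exact_mod_cast Nat.lt_succ_iff.1 (by exact_mod_cast hKi)
    have hieq : i + 1 = K := by omega
    have hir : (i : ℝ) = (K : ℝ) - 1 := by
      have : ((i : ℕ) : ℝ) + 1 = K := by exact_mod_cast congrArg (Nat.cast (R := ℝ)) hieq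
      linarith
    have hzu : z * K ≤ (1 - ε) * K := mul_le_mul_of_nonneg_right hmnC'.2 hK0.le
    have hzu2 : z * K ≤ (K : ℝ) - ε * K := by linarith [hzu, (by ring : (1 - ε) * (K:ℝ) = K - ε * K)]
    linarith


section specAux

variable {α γ : ℝ}

lemma gFun_cast (hα : 0 < α) (hγ0 : 0 < γ) (n : ℕ) :
    (gFun α γ n : ℤ) = ⌊(n : ℝ) * α + γ⌋ := by
  have h0 : (0 : ℤ) ≤ ⌊(n : ℝ) * α + γ⌋ := Int.floor_nonneg.2 (by positivity)
  simpa [gFun] using Int.toNat_of_nonneg h0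

lemma gFun_mono (hα : 0 < α) (hγ0 : 0 < γ) {m n : ℕ} (h : m ≤ n) :
    gFun α γ m ≤ gFun α γ n := by
  have h2 : (gFun α γ m : ℤ) ≤ (gFun α γ n : ℤ) := by
    rw [gFun_cast hα hγ0, gFun_cast hα hγ0]
    apply Int.floor_le_floor
    have : (m : ℝ) ≤ (n : ℝ) := by exact_mod_cast h
    nlinarith
  exact_mod_cast h2

lemma gFun_add_le (hα : 0 < α) (hγ0 : 0 < γ) (k i : ℕ) :
    gFun α γ (k + i) ≤ gFun α γ k + i * ⌈α⌉₊ := by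
  have h2 : (gFun α γ (k + i) : ℤ) ≤ (gFun α γ k : ℤ) + (i * ⌈α⌉₊ : ℕ) := by
    rw [gFun_cast hα hγ0, gFun_cast hα hγ0]
    have hle : ((k + i : ℕ) : ℝ) * α + γ ≤ ((k : ℝ) * α + γ) + ((i * ⌈α⌉₊ : ℕ) : ℝ) := by
      push_cast
      have h1 : (i : ℝ) * α ≤ (i : ℝ) * (⌈α⌉₊ : ℝ) :=
        mul_le_mul_of_nonneg_left (Nat.le_ceil α) (by positivity)
      nlinarith
    calc ⌊((k + i : ℕ) : ℝ) * α + γ⌋ ≤ ⌊((k : ℝ) * α + γ) + ((i * ⌈α⌉₊ : ℕ) : ℝ)⌋ :=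
          Int.floor_le_floor hle
      _ = ⌊(k : ℝ) * α + γ⌋ + (i * ⌈α⌉₊ : ℕ) := Int.floor_add_natCast _ _
  exact_mod_cast h2

lemma gFun_lower (hα : 0 < α) (hγ0 : 0 < γ) (n M : ℕ) :
    gFun α γ n + M + 1 ≤ gFun α γ (n + ⌈((M : ℝ) + 2) / α⌉₊) := by
  set m : ℕ := ⌈((M : ℝ) + 2) / α⌉₊ with hm
  have hmα : (M : ℝ) + 2 ≤ (m : ℝ) * α := by
    have h1 : ((M : ℝ) + 2) / α ≤ (m : ℝ) := Nat.le_ceil _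
    calc (M : ℝ) + 2 = (((M : ℝ) + 2) / α) * α := by field_simp
      _ ≤ (m : ℝ) * α := mul_le_mul_of_nonneg_right h1 hα.le
  have h2 : (gFun α γ n : ℤ) + M + 1 ≤ (gFun α γ (n + m) : ℤ) := by
    rw [gFun_cast hα hγ0, gFun_cast hα hγ0]
    have hfl : ((M : ℤ) + 1 : ℤ) ≤ ⌊(m : ℝ) * α⌋ := by
      apply Int.le_floor.2
      push_cast
      linarith
    have hsup : ⌊(n : ℝ) * α + γ⌋ + ⌊(m : ℝ) * α⌋ ≤ ⌊((n + m : ℕ) : ℝ) * α + γ⌋ := by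
      apply Int.le_floor.2
      push_cast
      have f1 := Int.floor_le ((n : ℝ) * α + γ)
      have f2 := Int.floor_le ((m : ℝ) * α)
      linarith
    linarith
  exact_mod_cast h2

lemma gFun_add_of_fract (hα : 0 < α) (hγ0 : 0 < γ) (hγ1 : γ < 1) {δ : ℝ}
    (h2δ : 2 * δ ≤ γ) (h2δ' : 2 * δ ≤ 1 - γ) {m n : ℕ}
    (hm1 : γ - δ < Int.fract ((m : ℝ) * α + γ)) (hm2 : Int.fract ((m : ℝ) * α + γ) < γ + δ)
    (hn1 : γ - δ < Int.fract ((n : ℝ) * α + γ)) (hn2 : Int.fract ((n : ℝ) * α + γ) < γ + δ) :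
    gFun α γ (m + n) = gFun α γ m + gFun α γ n := by
  have key : ⌊((m + n : ℕ) : ℝ) * α + γ⌋ = ⌊(m : ℝ) * α + γ⌋ + ⌊(n : ℝ) * α + γ⌋ := by
    have heq : ((m + n : ℕ) : ℝ) * α + γ =
        ((⌊(m : ℝ) * α + γ⌋ + ⌊(n : ℝ) * α + γ⌋ : ℤ) : ℝ) +
          (Int.fract ((m : ℝ) * α + γ) + Int.fract ((n : ℝ) * α + γ) - γ) := by
      unfold Int.fract
      push_cast
      ring
    rw [heq, Int.floor_intCast_add]
    have hz : ⌊Int.fract ((m : ℝ) * α + γ) + Int.fract ((n : ℝ) * α + γ) - γ⌋ = 0 :=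
      Int.floor_eq_zero_iff.2 (Set.mem_Ico.2 ⟨by linarith, by linarith⟩)
    rw [hz, add_zero]
  have h2 : (gFun α γ (m + n) : ℤ) = (gFun α γ m : ℤ) + (gFun α γ n : ℤ) := by
    rw [gFun_cast hα hγ0, gFun_cast hα hγ0, gFun_cast hα hγ0, key]
  exact_mod_cast h2

lemma P_mem (p : Ultrafilter ℕ) (hpp : p + p = p) (hα : 0 < α) {δ : ℝ} (hδ0 : 0 < δ)
    (hδγ : δ ≤ γ) (hδγ' : δ ≤ 1 - γ) :
    {n : ℕ | γ - δ < Int.fract ((n : ℝ) * α + γ) ∧ Int.fract ((n : ℝ) * α + γ) < γ + δ} ∈ p := by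
  have h := frac_small_mem p hpp α hδ0
  refine p.toFilter.mem_of_superset h ?_
  intro n hn
  set t := Int.fract ((n : ℝ) * α) with ht
  have ht0 : 0 ≤ t := Int.fract_nonneg _
  have ht1 : t < 1 := Int.fract_lt_one _
  have hfr : Int.fract ((n : ℝ) * α + γ) = Int.fract (t + γ) := by
    have heq : (n : ℝ) * α + γ = ((⌊(n : ℝ) * α⌋ : ℤ) : ℝ) + (t + γ) := by
      rw [ht, Int.fract]
      ring
    rw [heq, Int.fract_intCast_add]
  rcases hn with h1 | h2
  · have hfr2 : Int.fract (t + γ) = t + γ :=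
      Int.fract_eq_self.2 ⟨by linarith, by linarith⟩
    constructor
    · rw [hfr, hfr2]; linarith
    · rw [hfr, hfr2]; linarith
  · have hfr2 : Int.fract (t + γ) = t + γ - 1 := by
      rw [← Int.fract_sub_intCast (t + γ) 1]
      push_cast
      exact Int.fract_eq_self.2 ⟨by linarith, by linarith⟩
    constructor
    · rw [hfr, hfr2]; linarith
    · rw [hfr, hfr2]; linarith

lemma pws_mono {C B : Set ℕ} (h : IsPiecewiseSyndetic C) (hCB : C ⊆ B) :
    IsPiecewiseSyndetic B := by
  obtain ⟨l, hl⟩ := h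
  refine ⟨l, fun m => ?_⟩
  obtain ⟨n, hn0, hn⟩ := hl m
  refine ⟨n, hn0, fun k hk1 hk2 => ?_⟩
  obtain ⟨i, hi, hiC⟩ := hn k hk1 hk2
  exact ⟨i, hi, hCB hiC⟩

lemma pws_image (hα : 0 < α) (hγ0 : 0 < γ) {C : Set ℕ} (hC : IsPiecewiseSyndetic C) :
    IsPiecewiseSyndetic (gFun α γ '' C) := by
  classical
  obtain ⟨l, hl⟩ := hC
  set c : ℕ := ⌈α⌉₊ with hc
  have hc1 : 1 ≤ c := Nat.one_le_ceil_iff.2 hα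
  refine ⟨(l + 1) * c, fun M => ?_⟩
  set m : ℕ := ⌈((M : ℝ) + 2) / α⌉₊ with hm
  obtain ⟨n, hn0, hn⟩ := hl m
  refine ⟨gFun α γ n + 1, Nat.succ_pos _, fun K hK1 hK2 => ?_⟩
  have hub : K ≤ gFun α γ (n + m) := le_trans (by omega) (gFun_lower hα hγ0 n M)
  have hex : ∃ k, K ≤ gFun α γ k := ⟨n + m, hub⟩
  set k := Nat.find hex with hk
  have hkK : K ≤ gFun α γ k := Nat.find_spec hex
  have hkmin : ∀ j < k, gFun α γ j < K := fun j hj => lt_of_not_ge (Nat.find_min hex hj)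
  have hkn : n < k := by
    by_contra hcon
    push_neg at hcon
    have := gFun_mono hα hγ0 hcon
    omega
  have hknm : k ≤ n + m := Nat.find_min' hex hub
  have hk1' : gFun α γ (k - 1) < K := hkmin (k - 1) (by omega)
  have hstep : gFun α γ k ≤ gFun α γ (k - 1) + c := by
    calc gFun α γ k = gFun α γ ((k - 1) + 1) := by congr 1; omega
      _ ≤ gFun α γ (k - 1) + 1 * c := gFun_add_le hα hγ0 (k - 1) 1
      _ = gFun α γ (k - 1) + c := by ring
  obtain ⟨i, hil, hiC⟩ := hn k (by omega) (by omega)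
  have hgi : gFun α γ (k + i) ≤ gFun α γ k + i * c := gFun_add_le hα hγ0 k i
  have hgeK : K ≤ gFun α γ (k + i) := le_trans hkK (gFun_mono hα hγ0 (by omega))
  have hilc : i * c ≤ l * c := Nat.mul_le_mul_right c hil
  have hlc : (l + 1) * c = l * c + c := by ring
  refine ⟨gFun α γ (k + i) - K, by omega, ?_⟩
  have hKj : K + (gFun α γ (k + i) - K) = gFun α γ (k + i) := by omega
  rw [hKj]
  exact ⟨k + i, hiC, rfl⟩

end specAux

end QCAux

/-- If `A ⊆ ℕ` is a quasi-central set, then so is `g_{α,γ}(A)` for all `α > 0` and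
`0 < γ < 1`. -/
theorem quasiCentral_spectra (A : Set ℕ) (hA : IsQuasiCentralSet A) (α γ : ℝ) (hα : 0 < α)
    (hγ0 : 0 < γ) (hγ1 : γ < 1) : IsQuasiCentralSet (gImage α γ A) := by
  obtain ⟨p, hpp, hpws, hAp⟩ := hA
  set f : ℕ → ℕ := gFun α γ with hf
  set q : Ultrafilter ℕ := p.map f with hq
  set δ : ℝ := min γ (1 - γ) / 2 with hδ
  have hmin : 0 < min γ (1 - γ) := lt_min hγ0 (by linarith)
  have hδ0 : 0 < δ := by rw [hδ]; positivity
  have h2δγ : 2 * δ ≤ γ := by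
    have := min_le_left γ (1 - γ); rw [hδ]; linarith
  have h2δγ' : 2 * δ ≤ 1 - γ := by
    have := min_le_right γ (1 - γ); rw [hδ]; linarith
  set P : Set ℕ :=
    {n : ℕ | γ - δ < Int.fract ((n : ℝ) * α + γ) ∧ Int.fract ((n : ℝ) * α + γ) < γ + δ} with hP
  have hPp : P ∈ p := P_mem p hpp hα hδ0 (by linarith) (by linarith)
  have hPev : ∀ᶠ n in (p : Filter ℕ), n ∈ P := hPp
  have hadd : ∀ m ∈ P, ∀ n ∈ P, f (m + n) = f m + f n := fun m hm n hn =>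
    gFun_add_of_fract hα hγ0 hγ1 h2δγ h2δγ' hm.1 hm.2 hn.1 hn.2
  have step1 : ∀ B : Set ℕ,
      (B ∈ q + q ↔ ∀ᶠ m in (p : Filter ℕ), ∀ᶠ n in (p : Filter ℕ), f m + f n ∈ B) := by
    intro B
    have h1 : (B ∈ q + q) ↔ ∀ᶠ a in ((q + q : Ultrafilter ℕ) : Filter ℕ), a ∈ B := Iff.rfl
    rw [h1, Ultrafilter.eventually_add]
    simp only [hq, Ultrafilter.coe_map, Filter.eventually_map]
  have step2 : ∀ B : Set ℕ,
      (B ∈ q ↔ ∀ᶠ m in (p : Filter ℕ), ∀ᶠ n in (p : Filter ℕ), f (m + n) ∈ B) := by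
    intro B
    have h1 : B ∈ q ↔ f ⁻¹' B ∈ p := Ultrafilter.mem_map
    rw [h1]
    have h2 : f ⁻¹' B ∈ p ↔ f ⁻¹' B ∈ p + p := by rw [hpp]
    rw [h2]
    have h3 : (f ⁻¹' B ∈ p + p) ↔
        ∀ᶠ a in ((p + p : Ultrafilter ℕ) : Filter ℕ), a ∈ f ⁻¹' B := Iff.rfl
    rw [h3, Ultrafilter.eventually_add]
    rfl
  have bridge : ∀ B : Set ℕ,
      ((∀ᶠ m in (p : Filter ℕ), ∀ᶠ n in (p : Filter ℕ), f (m + n) ∈ B) ↔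
        (∀ᶠ m in (p : Filter ℕ), ∀ᶠ n in (p : Filter ℕ), f m + f n ∈ B)) := by
    intro B
    constructor
    · intro h
      filter_upwards [h, hPev] with m hm hmP
      filter_upwards [hm, hPev] with n hn hnP
      rwa [← hadd m hmP n hnP]
    · intro h
      filter_upwards [h, hPev] with m hm hmP
      filter_upwards [hm, hPev] with n hn hnP
      rwa [hadd m hmP n hnP]
  have hidem : q + q = q := by
    have hBiff : ∀ B : Set ℕ, B ∈ q + q ↔ B ∈ q := fun B =>
      (step1 B).trans (((bridge B).symm).trans (step2 B).symm)
    apply Ultrafilter.coe_inj.1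
    exact Filter.ext fun B => by
      rw [Ultrafilter.mem_coe, Ultrafilter.mem_coe]; exact hBiff B
  refine ⟨q, hidem, ?_, ?_⟩
  · intro B hBq
    have hpre : f ⁻¹' B ∈ p := Ultrafilter.mem_map.1 hBq
    have h1 : IsPiecewiseSyndetic (f ⁻¹' B) := hpws _ hpre
    have h2 : IsPiecewiseSyndetic (gFun α γ '' (f ⁻¹' B)) := pws_image hα hγ0 h1
    exact pws_mono h2 (Set.image_preimage_subset f B)
  · have hsub : A ⊆ f ⁻¹' (gImage α γ A) := Set.subset_preimage_image f A
    exact Ultrafilter.mem_map.2 (p.toFilter.mem_of_superset hAp hsub)
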